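/- A nontrivial sub-root function ψ : [0,∞) → [0,∞) is continuous on (0,∞) and the equation ψ(r) = r has a unique positive solution r*; moreover for all r > 0, r ≥ ψ(r) if and only if r ≥ r*. -/

import Mathlib

open Real Set

theorem subroot_fixed_point (ψ : ℝ → ℝ)
    (hnn : ∀ r, 0 ≤ r → 0 ≤ ψ r)
    (hmono : MonotoneOn ψ (Set.Ici 0))
    (hanti : AntitoneOn (fun r => ψ r / Real.sqrt r) (Set.Ioi 0))
    (hnontriv : ∃ r, 0 < r ∧ 0 < ψ r) :
    ContinuousOn ψ (Set.Ioi 0) ∧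
    ∃ rstar : ℝ, 0 < rstar ∧ ψ rstar = rstar ∧
      (∀ r, 0 < r → ψ r = r → r = rstar) ∧
      (∀ r, 0 < r → (ψ r ≤ r ↔ rstar ≤ r)) := by
  -- key inequalities
  have key : ∀ s r : ℝ, 0 < s → s ≤ r → ψ r ≤ ψ s * (Real.sqrt r / Real.sqrt s) := by
    intro s r hs hsr
    have hr : 0 < r := hs.trans_le hsr
    have h := hanti (Set.mem_Ioi.2 hs) (Set.mem_Ioi.2 hr) hsr
    simp only at h
    have hsr' : (0:ℝ) < Real.sqrt r := Real.sqrt_pos.2 hr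
    have hss : (0:ℝ) < Real.sqrt s := Real.sqrt_pos.2 hs
    calc ψ r = ψ r / Real.sqrt r * Real.sqrt r := by field_simp
      _ ≤ ψ s / Real.sqrt s * Real.sqrt r := by nlinarith
      _ = ψ s * (Real.sqrt r / Real.sqrt s) := by ring
  have key2 : ∀ s r : ℝ, 0 < s → s ≤ r → ψ r * (Real.sqrt s / Real.sqrt r) ≤ ψ s := by
    intro s r hs hsr
    have hr : 0 < r := hs.trans_le hsr
    have h := hanti (Set.mem_Ioi.2 hs) (Set.mem_Ioi.2 hr) hsr
    simp only at h
    have hsr' : (0:ℝ) < Real.sqrt r := Real.sqrt_pos.2 hr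
    have hss : (0:ℝ) < Real.sqrt s := Real.sqrt_pos.2 hs
    calc ψ r * (Real.sqrt s / Real.sqrt r) = ψ r / Real.sqrt r * Real.sqrt s := by ring
      _ ≤ ψ s / Real.sqrt s * Real.sqrt s := by nlinarith
      _ = ψ s := by field_simp
  have hcont : ContinuousOn ψ (Set.Ioi 0) := by
    intro x hx
    have hx0 : (0:ℝ) < x := hx
    have hsx : (0:ℝ) < Real.sqrt x := Real.sqrt_pos.2 hx0
    have hψx : 0 ≤ ψ x := hnn x hx0.le
    set g : ℝ → ℝ := fun r => ψ x * (Real.sqrt r / Real.sqrt x) with hg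
    have hgc : Continuous g := by
      apply continuous_const.mul
      exact (Real.continuous_sqrt).div_const _
    have hgx : g x = ψ x := by
      simp only [hg]
      rw [div_self hsx.ne', mul_one]
    have hlt : Filter.Tendsto (fun r => min (ψ x) (g r)) (nhdsWithin x (Set.Ioi 0)) (nhds (ψ x)) := by
      have : Filter.Tendsto (fun r => min (ψ x) (g r)) (nhds x) (nhds (min (ψ x) (g x))) :=
        (continuous_const.min hgc).tendsto x
      rw [hgx, min_self] at this
      exact this.mono_left nhdsWithin_le_nhds
    have hut : Filter.Tendsto (fun r => max (ψ x) (g r)) (nhdsWithin x (Set.Ioi 0)) (nhds (ψ x)) := by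
      have : Filter.Tendsto (fun r => max (ψ x) (g r)) (nhds x) (nhds (max (ψ x) (g x))) :=
        (continuous_const.max hgc).tendsto x
      rw [hgx, max_self] at this
      exact this.mono_left nhdsWithin_le_nhds
    have hbound : ∀ r ∈ Set.Ioi (0:ℝ), min (ψ x) (g r) ≤ ψ r ∧ ψ r ≤ max (ψ x) (g r) := by
      intro r hr
      have hr0 : (0:ℝ) < r := hr
      rcases le_total r x with h | h
      · constructor
        · refine le_trans (min_le_right _ _) ?_
          have := key2 r x hr0 h
          have hsr : (0:ℝ) < Real.sqrt r := Real.sqrt_pos.2 hr0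
          calc g r = ψ x * (Real.sqrt r / Real.sqrt x) := rfl
            _ ≤ ψ r := this
        · exact le_trans (hmono hr0.le hx0.le h) (le_max_left _ _)
      · constructor
        · exact le_trans (min_le_left _ _) (hmono hx0.le hr0.le h)
        · exact le_trans (key x r hx0 h) (le_max_right _ _)
    apply tendsto_of_tendsto_of_tendsto_of_le_of_le' hlt hut
    · filter_upwards [self_mem_nhdsWithin] with r hr using (hbound r hr).1
    · filter_upwards [self_mem_nhdsWithin] with r hr using (hbound r hr).2
  refine ⟨hcont, ?_⟩
  obtain ⟨r₀, hr₀, hψr₀⟩ := hnontriv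
  set c : ℝ := ψ r₀ / Real.sqrt r₀ with hc
  have hsr₀ : (0:ℝ) < Real.sqrt r₀ := Real.sqrt_pos.2 hr₀
  have hcpos : 0 < c := div_pos hψr₀ hsr₀
  set a : ℝ := min r₀ (c^2) / 2 with ha
  set b : ℝ := max r₀ (c^2) with hb
  have ha0 : 0 < a := by positivity
  have hab : a ≤ b := by
    have : a ≤ r₀ := by
      have := min_le_left r₀ (c^2); simp only [ha]; linarith
    exact this.trans (le_max_left _ _)
  have har₀ : a ≤ r₀ := by
    have := min_le_left r₀ (c^2); simp only [ha]; linarith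
  have hac : a < c^2 := by
    have := min_le_right r₀ (c^2); simp only [ha]; linarith
  have hbr₀ : r₀ ≤ b := le_max_left _ _
  have hbc : c^2 ≤ b := le_max_right _ _
  -- ψ a ≥ a
  have hψa : a ≤ ψ a := by
    have h1 := key2 a r₀ ha0 har₀  -- ψ r₀ * (√a/√r₀) ≤ ψ a
    have hsa : (0:ℝ) < Real.sqrt a := Real.sqrt_pos.2 ha0
    have h2 : Real.sqrt a < c := by
      have : Real.sqrt a < Real.sqrt (c^2) := Real.sqrt_lt_sqrt ha0.le hac
      rwa [Real.sqrt_sq hcpos.le] at this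
    have h3 : c * Real.sqrt a ≤ ψ a := by
      have : c * Real.sqrt a = ψ r₀ * (Real.sqrt a / Real.sqrt r₀) := by
        field_simp [hc]
        rw [hc]; field_simp
      linarith [h1, this.ge.trans_eq rfl, this ▸ h1]
    have h4 : Real.sqrt a * Real.sqrt a = a := Real.mul_self_sqrt ha0.le
    nlinarith
  -- ψ b ≤ b
  have hψb : ψ b ≤ b := by
    have hb0 : 0 < b := ha0.trans_le hab
    have h1 := key r₀ b hr₀ hbr₀  -- ψ b ≤ ψ r₀ * (√b/√r₀)
    have hsb : (0:ℝ) < Real.sqrt b := Real.sqrt_pos.2 hb0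
    have h2 : c ≤ Real.sqrt b := by
      have : Real.sqrt (c^2) ≤ Real.sqrt b := Real.sqrt_le_sqrt hbc
      rwa [Real.sqrt_sq hcpos.le] at this
    have h3 : ψ b ≤ c * Real.sqrt b := by
      have heq : ψ r₀ * (Real.sqrt b / Real.sqrt r₀) = c * Real.sqrt b := by
        field_simp [hc]
        rw [hc]; field_simp
      linarith [heq ▸ h1]
    have h4 : Real.sqrt b * Real.sqrt b = b := Real.mul_self_sqrt hb0.le
    nlinarith
  -- IVT
  have hfc : ContinuousOn (fun r => ψ r - r) (Set.Icc a b) := by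
    apply ContinuousOn.sub
    · exact hcont.mono (fun y hy => lt_of_lt_of_le ha0 hy.1)
    · exact continuousOn_id
  have := intermediate_value_Icc' hab hfc
  have hmem : (0:ℝ) ∈ Set.Icc (ψ b - b) (ψ a - a) := ⟨by linarith, by linarith⟩
  obtain ⟨rstar, hrmem, hrfix⟩ := this hmem
  have hrpos : 0 < rstar := lt_of_lt_of_le ha0 hrmem.1
  have hfix : ψ rstar = rstar := by simpa [sub_eq_zero] using hrfix
  have hgstar : ψ rstar / Real.sqrt rstar = Real.sqrt rstar := by
    rw [hfix, Real.div_sqrt]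
  have hsr : (0:ℝ) < Real.sqrt rstar := Real.sqrt_pos.2 hrpos
  -- characterization
  have hchar : ∀ r, 0 < r → (ψ r ≤ r ↔ rstar ≤ r) := by
    intro r hr
    have hsrr : (0:ℝ) < Real.sqrt r := Real.sqrt_pos.2 hr
    constructor
    · intro hle
      by_contra hlt
      push_neg at hlt
      have h := hanti (Set.mem_Ioi.2 hr) (Set.mem_Ioi.2 hrpos) hlt.le
      simp only at h
      rw [hgstar] at h
      -- √rstar ≤ ψ r / √r
      have h2 : Real.sqrt r < Real.sqrt rstar := Real.sqrt_lt_sqrt hr.le hlt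
      have h3 : Real.sqrt rstar * Real.sqrt r ≤ ψ r := by
        rw [le_div_iff₀ hsrr] at h
        linarith
      have h4 : Real.sqrt r * Real.sqrt r = r := Real.mul_self_sqrt hr.le
      nlinarith
    · intro hge
      have h := hanti (Set.mem_Ioi.2 hrpos) (Set.mem_Ioi.2 hr) hge
      simp only at h
      rw [hgstar] at h
      -- ψ r / √r ≤ √rstar
      have h2 : Real.sqrt rstar ≤ Real.sqrt r := Real.sqrt_le_sqrt hge
      have h3 : ψ r ≤ Real.sqrt rstar * Real.sqrt r := by
        rw [div_le_iff₀ hsrr] at h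
        linarith
      have h4 : Real.sqrt r * Real.sqrt r = r := Real.mul_self_sqrt hr.le
      nlinarith
  refine ⟨rstar, hrpos, hfix, ?_, hchar⟩
  intro r hr hfr
  have h1 : rstar ≤ r := (hchar r hr).1 hfr.le
  rcases eq_or_lt_of_le h1 with h | h
  · exact h.symm
  · exfalso
    have hh := hanti (Set.mem_Ioi.2 hrpos) (Set.mem_Ioi.2 hr) h.le
    simp only at hh
    rw [hgstar] at hh
    have hsrr : (0:ℝ) < Real.sqrt r := Real.sqrt_pos.2 hr
    have h2 : Real.sqrt rstar < Real.sqrt r := Real.sqrt_lt_sqrt hrpos.le h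
    have h3 : ψ r ≤ Real.sqrt rstar * Real.sqrt r := by
      rw [div_le_iff₀ hsrr] at hh
      linarith
    have h4 : Real.sqrt r * Real.sqrt r = r := Real.mul_self_sqrt hr.le
    nlinarith
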